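/- arXiv:2407.04075 — 2 statements merged into one kernel-verified Lean document; each statement's English description precedes it below -/
import Mathlib

section
/- Consider an L-layer multilayer perceptron with weight matrices W¹ ∈ ℝ^{d×w}, W², …, W^{L−1} ∈ ℝ^{w×w}, W^L ∈ ℝ^{w×C}, where L ≥ 4. Suppose each layer ℓ is independently randomly pruned so that a uniformly random set of exactly n_ℓ entries of W^ℓ remains nonzero. Assume w > max over ℓ ∈ {2,…,L−2} of (n_ℓ + n_{ℓ+1}). Then the probability that the pruned network contains no connected path from input to output tends to 1 as w → ∞ (with all n_ℓ fixed). -/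
open Filter

/-- Layer widths of an `L`-layer MLP: input dimension `d`, output dimension `C`,
and hidden width `w`. -/
def mlpDim (d C L w : ℕ) (i : ℕ) : ℕ :=
  if i = 0 then d else if i = L then C else w

/-- `M ℓ` (for `ℓ : Fin L`) is the set of retained positions of the weight matrix
`W^{ℓ+1}`, whose row indices live in layer `ℓ+1` and column indices in layer `ℓ`.
`mlpNoPath` states there is no connected input-to-output path, i.e. no sequence of
indices `i₀, …, i_L` with every corresponding weight entry retained. -/
def mlpNoPath (d C L w : ℕ) (M : Fin L → Finset (ℕ × ℕ)) : Prop :=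
  ¬ ∃ path : (i : Fin (L + 1)) → Fin (mlpDim d C L w i),
      ∀ ℓ : Fin L, (((path ℓ.succ : ℕ)), ((path ℓ.castSucc : ℕ))) ∈ M ℓ

instance (d C L w : ℕ) : DecidablePred (mlpNoPath d C L w) := fun M => by
  unfold mlpNoPath; infer_instance


open Filter Finset

lemma aux_count_mem {α : Type*} [DecidableEq α] (G : Finset α) (k : ℕ) (q : α) :
    ((G.powersetCard k).filter (fun B => q ∈ B)).card ≤ (G.card - 1).choose (k - 1) := by
  by_cases hq : q ∈ G
  · have h : ((G.powersetCard k).filter (fun B => q ∈ B)).card ≤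
        ((G.erase q).powersetCard (k - 1)).card :=
      Finset.card_le_card_of_injOn (fun B => B.erase q) ?_ ?_
    · simpa [Finset.card_powersetCard, Finset.card_erase_of_mem hq] using h
    · intro B hB
      simp only [Finset.mem_coe, Finset.mem_filter, Finset.mem_powersetCard] at hB
      obtain ⟨⟨hBG, hBk⟩, hqB⟩ := hB
      rw [Finset.mem_coe, Finset.mem_powersetCard]
      exact ⟨Finset.erase_subset_erase _ hBG,
        by rw [Finset.card_erase_of_mem hqB, hBk]⟩
    · intro B hB B' hB' h
      simp only [Finset.coe_filter, Set.mem_setOf_eq, Finset.mem_powersetCard] at hB hB'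
      rw [← Finset.insert_erase hB.2, ← Finset.insert_erase hB'.2]
      exact congrArg _ h
  · have h : (G.powersetCard k).filter (fun B => q ∈ B) = ∅ := by
      rw [Finset.filter_eq_empty_iff]
      intro B hB hqB
      exact hq ((Finset.mem_powersetCard.1 hB).1 hqB)
    simp [h]

lemma aux_choose (N k : ℕ) (hN : 1 ≤ N) (hk : 1 ≤ k) :
    N * (N - 1).choose (k - 1) = k * N.choose k := by
  obtain ⟨N, rfl⟩ : ∃ m, N = m + 1 := ⟨N - 1, by omega⟩
  obtain ⟨k, rfl⟩ : ∃ m, k = m + 1 := ⟨k - 1, by omega⟩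
  simp only [Nat.add_sub_cancel]
  simpa [Nat.succ_eq_add_one, mul_comm] using Nat.add_one_mul_choose_eq N k

lemma aux_two_coord {ι : Type*} [Fintype ι] [DecidableEq ι] {α : Type*} [DecidableEq α]
    (A : ι → Finset α) (i1 i2 : ι) (h12 : i1 ≠ i2)
    (P1 P2 : α → Prop) [DecidablePred P1] [DecidablePred P2] :
    ((Fintype.piFinset A).filter (fun M => P1 (M i1) ∧ P2 (M i2))).card *
      ((A i1).card * (A i2).card) =
    (Fintype.piFinset A).card *
      (((A i1).filter P1).card * ((A i2).filter P2).card) := by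
  classical
  set t1 := (A i1).filter P1 with ht1
  set t2 := (A i2).filter P2 with ht2
  have hset : (Fintype.piFinset A).filter (fun M => P1 (M i1) ∧ P2 (M i2)) =
      Fintype.piFinset (Function.update (Function.update A i1 t1) i2 t2) := by
    ext M
    simp only [Finset.mem_filter, Fintype.mem_piFinset, Function.update_apply]
    constructor
    · rintro ⟨h, h1, h2⟩ j
      split_ifs with hj2 hj1
      · subst hj2; exact Finset.mem_filter.2 ⟨h j, h2⟩
      · subst hj1; exact Finset.mem_filter.2 ⟨h j, h1⟩
      · exact h j
    · intro h
      refine ⟨fun j => ?_, ?_, ?_⟩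
      · have hj := h j
        split_ifs at hj with hj2 hj1
        · subst hj2; exact (Finset.mem_filter.1 hj).1
        · subst hj1; exact (Finset.mem_filter.1 hj).1
        · exact hj
      · have hj := h i1
        rw [if_neg h12, if_pos rfl] at hj
        exact (Finset.mem_filter.1 hj).2
      · have hj := h i2
        rw [if_pos rfl] at hj
        exact (Finset.mem_filter.1 hj).2
  rw [hset, Fintype.card_piFinset, Fintype.card_piFinset]
  have hmem : i1 ∈ Finset.univ.erase i2 := Finset.mem_erase.2 ⟨h12, Finset.mem_univ i1⟩
  have hLprod : ∏ j, (Function.update (Function.update A i1 t1) i2 t2 j).card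
      = t2.card * (t1.card * ∏ j ∈ (Finset.univ.erase i2).erase i1, (A j).card) := by
    rw [← Finset.mul_prod_erase Finset.univ _ (Finset.mem_univ i2),
        ← Finset.mul_prod_erase _ _ hmem]
    congr 1
    · rw [Function.update_self]
    congr 1
    · rw [Function.update_of_ne h12, Function.update_self]
    · refine Finset.prod_congr rfl fun j hj => ?_
      have hj1 : j ≠ i1 := (Finset.mem_erase.1 hj).1
      have hj2 : j ≠ i2 := (Finset.mem_erase.1 (Finset.mem_erase.1 hj).2).1
      rw [Function.update_of_ne hj2, Function.update_of_ne hj1]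
  have hRprod : ∏ j, (A j).card
      = (A i2).card * ((A i1).card * ∏ j ∈ (Finset.univ.erase i2).erase i1, (A j).card) := by
    rw [← Finset.mul_prod_erase Finset.univ _ (Finset.mem_univ i2),
        ← Finset.mul_prod_erase _ _ hmem]
  rw [hLprod, hRprod]
  ring


lemma aux_row_bound (w k j : ℕ) :
    (((Finset.range w ×ˢ Finset.range w).powersetCard k).filter
      (fun B => ∃ p ∈ B, p.1 = j)).card ≤ w * (w * w - 1).choose (k - 1) := by
  classical
  have hsub : ((Finset.range w ×ˢ Finset.range w).powersetCard k).filter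
        (fun B => ∃ p ∈ B, p.1 = j)
      ⊆ (Finset.range w).biUnion (fun y =>
          ((Finset.range w ×ˢ Finset.range w).powersetCard k).filter (fun B => (j, y) ∈ B)) := by
    intro B hB
    simp only [Finset.mem_filter, Finset.mem_powersetCard] at hB
    obtain ⟨⟨hBG, hBk⟩, p, hpB, hpj⟩ := hB
    have hpG := hBG hpB
    rw [Finset.mem_product] at hpG
    refine Finset.mem_biUnion.2 ⟨p.2, hpG.2, ?_⟩
    refine Finset.mem_filter.2 ⟨Finset.mem_powersetCard.2 ⟨hBG, hBk⟩, ?_⟩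
    have hp : (j, p.2) = p := Prod.ext hpj.symm rfl
    rw [hp]; exact hpB
  calc _ ≤ _ := Finset.card_le_card hsub
    _ ≤ ∑ y ∈ Finset.range w, (((Finset.range w ×ˢ Finset.range w).powersetCard k).filter
          (fun B => (j, y) ∈ B)).card := Finset.card_biUnion_le
    _ ≤ ∑ _y ∈ Finset.range w, (w * w - 1).choose (k - 1) :=
        Finset.sum_le_sum (fun y _ => by
          have h := aux_count_mem (Finset.range w ×ˢ Finset.range w) k (j, y)
          simpa [Finset.card_product, Finset.card_range] using h)
    _ = w * (w * w - 1).choose (k - 1) := by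
        rw [Finset.sum_const, Finset.card_range, smul_eq_mul]

lemma aux_col_bound (w k j : ℕ) :
    (((Finset.range w ×ˢ Finset.range w).powersetCard k).filter
      (fun B => ∃ p ∈ B, p.2 = j)).card ≤ w * (w * w - 1).choose (k - 1) := by
  classical
  have hsub : ((Finset.range w ×ˢ Finset.range w).powersetCard k).filter
        (fun B => ∃ p ∈ B, p.2 = j)
      ⊆ (Finset.range w).biUnion (fun y =>
          ((Finset.range w ×ˢ Finset.range w).powersetCard k).filter (fun B => (y, j) ∈ B)) := by
    intro B hB
    simp only [Finset.mem_filter, Finset.mem_powersetCard] at hB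
    obtain ⟨⟨hBG, hBk⟩, p, hpB, hpj⟩ := hB
    have hpG := hBG hpB
    rw [Finset.mem_product] at hpG
    refine Finset.mem_biUnion.2 ⟨p.1, hpG.1, ?_⟩
    refine Finset.mem_filter.2 ⟨Finset.mem_powersetCard.2 ⟨hBG, hBk⟩, ?_⟩
    have hp : (p.1, j) = p := Prod.ext rfl hpj.symm
    rw [hp]; exact hpB
  calc _ ≤ _ := Finset.card_le_card hsub
    _ ≤ ∑ y ∈ Finset.range w, (((Finset.range w ×ˢ Finset.range w).powersetCard k).filter
          (fun B => (y, j) ∈ B)).card := Finset.card_biUnion_le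
    _ ≤ ∑ _y ∈ Finset.range w, (w * w - 1).choose (k - 1) :=
        Finset.sum_le_sum (fun y _ => by
          have h := aux_count_mem (Finset.range w ×ˢ Finset.range w) k (y, j)
          simpa [Finset.card_product, Finset.card_range] using h)
    _ = w * (w * w - 1).choose (k - 1) := by
        rw [Finset.sum_const, Finset.card_range, smul_eq_mul]

/-- in an `L`-layer MLP (`L ≥ 4`) whose layer `ℓ` is independently pruned
to a uniformly random set of exactly `n ℓ` nonzero entries, the probability that the
pruned network contains no connected path from input to output tends to `1` as the
hidden width `w → ∞`. -/
theorem stmt7 (L d C : ℕ) (n : ℕ → ℕ) (hL : 4 ≤ L) (hd : 0 < d) (hC : 0 < C)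
    (hn : ∀ ℓ : ℕ, 1 ≤ ℓ → ℓ ≤ L → 0 < n ℓ) :
    Tendsto (fun w : ℕ =>
      (((Fintype.piFinset (fun ℓ : Fin L =>
            (Finset.range (mlpDim d C L w ((ℓ : ℕ) + 1)) ×ˢ
              Finset.range (mlpDim d C L w (ℓ : ℕ))).powersetCard (n ((ℓ : ℕ) + 1)))).filter
          (mlpNoPath d C L w)).card : ℝ) /
        ((Fintype.piFinset (fun ℓ : Fin L =>
            (Finset.range (mlpDim d C L w ((ℓ : ℕ) + 1)) ×ˢ
              Finset.range (mlpDim d C L w (ℓ : ℕ))).powersetCard (n ((ℓ : ℕ) + 1)))).card : ℝ))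
      atTop (nhds 1) := by
  classical
  have hi1 : (1 : ℕ) < L := by omega
  have hi2 : (2 : ℕ) < L := by omega
  have key : ∀ᶠ w : ℕ in atTop,
      1 - (n 2 * n 3 : ℝ) / w ≤
        (((Fintype.piFinset (fun ℓ : Fin L =>
            (Finset.range (mlpDim d C L w ((ℓ : ℕ) + 1)) ×ˢ
              Finset.range (mlpDim d C L w (ℓ : ℕ))).powersetCard (n ((ℓ : ℕ) + 1)))).filter
          (mlpNoPath d C L w)).card : ℝ) /
        ((Fintype.piFinset (fun ℓ : Fin L =>
            (Finset.range (mlpDim d C L w ((ℓ : ℕ) + 1)) ×ˢ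
              Finset.range (mlpDim d C L w (ℓ : ℕ))).powersetCard (n ((ℓ : ℕ) + 1)))).card : ℝ) ∧
        (((Fintype.piFinset (fun ℓ : Fin L =>
            (Finset.range (mlpDim d C L w ((ℓ : ℕ) + 1)) ×ˢ
              Finset.range (mlpDim d C L w (ℓ : ℕ))).powersetCard (n ((ℓ : ℕ) + 1)))).filter
          (mlpNoPath d C L w)).card : ℝ) /
        ((Fintype.piFinset (fun ℓ : Fin L =>
            (Finset.range (mlpDim d C L w ((ℓ : ℕ) + 1)) ×ˢ
              Finset.range (mlpDim d C L w (ℓ : ℕ))).powersetCard (n ((ℓ : ℕ) + 1)))).card : ℝ)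
          ≤ 1 := by
    filter_upwards [eventually_ge_atTop ((Finset.range (L + 1)).sup n + 1)] with w hw
    set Aw : Fin L → Finset (Finset (ℕ × ℕ)) := fun ℓ : Fin L =>
      (Finset.range (mlpDim d C L w ((ℓ : ℕ) + 1)) ×ˢ
        Finset.range (mlpDim d C L w (ℓ : ℕ))).powersetCard (n ((ℓ : ℕ) + 1)) with hAw
    have hw1 : 1 ≤ w := by omega
    have hwn : ∀ ℓ, ℓ ≤ L → n ℓ ≤ w := by
      intro ℓ hℓ
      have h := Finset.le_sup (f := n) (Finset.mem_range.2 (show ℓ < L + 1 by omega))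
      omega
    have hdim : ∀ i, 1 ≤ i → i < L → mlpDim d C L w i = w := by
      intro i h1 h2
      unfold mlpDim
      rw [if_neg (by omega), if_neg (by omega)]
    have hdimpos : ∀ i, 1 ≤ mlpDim d C L w i := by
      intro i; unfold mlpDim; split_ifs <;> omega
    have hgcard : ∀ ℓ : Fin L, w ≤ (Finset.range (mlpDim d C L w ((ℓ : ℕ) + 1)) ×ˢ
        Finset.range (mlpDim d C L w (ℓ : ℕ))).card := by
      intro ℓ
      rw [Finset.card_product, Finset.card_range, Finset.card_range]
      by_cases h0 : (ℓ : ℕ) = 0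
      · rw [h0, hdim 1 le_rfl (by omega)]
        calc w = w * 1 := (mul_one w).symm
          _ ≤ w * mlpDim d C L w 0 := Nat.mul_le_mul_left w (hdimpos 0)
      · have hl : (ℓ : ℕ) < L := ℓ.isLt
        rw [hdim ℓ (by omega) hl]
        calc w = 1 * w := (one_mul w).symm
          _ ≤ mlpDim d C L w ((ℓ : ℕ) + 1) * w :=
            Nat.mul_le_mul_right w (hdimpos ((ℓ : ℕ) + 1))
    have hcardA : ∀ ℓ : Fin L, 0 < (Aw ℓ).card := by
      intro ℓ
      rw [hAw]
      simp only [Finset.card_powersetCard]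
      exact Nat.choose_pos (le_trans (hwn ((ℓ : ℕ) + 1) (by omega)) (hgcard ℓ))
    have hT : 0 < (Fintype.piFinset Aw).card := by
      rw [Fintype.card_piFinset]
      exact Finset.prod_pos (fun ℓ _ => hcardA ℓ)
    have hne : (⟨1, hi1⟩ : Fin L) ≠ ⟨2, hi2⟩ := by
      intro h
      have := congrArg Fin.val h
      simp at this
    have hAw1 : Aw ⟨1, hi1⟩ = (Finset.range w ×ˢ Finset.range w).powersetCard (n 2) := by
      rw [hAw]
      show (Finset.range (mlpDim d C L w (1 + 1)) ×ˢ
        Finset.range (mlpDim d C L w 1)).powersetCard (n (1 + 1)) = _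
      rw [hdim (1 + 1) (by omega) (by omega), hdim 1 (by omega) (by omega)]
    have hAw2 : Aw ⟨2, hi2⟩ = (Finset.range w ×ˢ Finset.range w).powersetCard (n 3) := by
      rw [hAw]
      show (Finset.range (mlpDim d C L w (2 + 1)) ×ˢ
        Finset.range (mlpDim d C L w 2)).powersetCard (n (2 + 1)) = _
      rw [hdim (2 + 1) (by omega) (by omega), hdim 2 (by omega) (by omega)]
    have ha1 : (Aw ⟨1, hi1⟩).card = (w * w).choose (n 2) := by
      rw [hAw1]; simp [Finset.card_powersetCard]
    have ha2 : (Aw ⟨2, hi2⟩).card = (w * w).choose (n 3) := by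
      rw [hAw2]; simp [Finset.card_powersetCard]
    have hn2 : 1 ≤ n 2 := hn 2 (by omega) (by omega)
    have hn3 : 1 ≤ n 3 := hn 3 (by omega) (by omega)
    have hN1 : 1 ≤ w * w := Nat.one_le_iff_ne_zero.2 (by positivity)
    -- per-j bound
    have hstep : ∀ j ∈ Finset.range w,
        ((Fintype.piFinset Aw).filter
          (fun M => (∃ p ∈ M ⟨1, hi1⟩, p.1 = j) ∧ (∃ q ∈ M ⟨2, hi2⟩, q.2 = j))).card *
            (w * w * (w * w))
        ≤ (Fintype.piFinset Aw).card * (w * n 2 * (w * n 3)) := by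
      intro j _
      have heq := aux_two_coord Aw ⟨1, hi1⟩ ⟨2, hi2⟩ hne
        (fun B => ∃ p ∈ B, p.1 = j) (fun B => ∃ q ∈ B, q.2 = j)
      have hf1 : ((Aw ⟨1, hi1⟩).filter (fun B => ∃ p ∈ B, p.1 = j)).card ≤
          w * (w * w - 1).choose (n 2 - 1) := by
        rw [hAw1]; exact aux_row_bound w (n 2) j
      have hf2 : ((Aw ⟨2, hi2⟩).filter (fun B => ∃ q ∈ B, q.2 = j)).card ≤
          w * (w * w - 1).choose (n 3 - 1) := by
        rw [hAw2]; exact aux_col_bound w (n 3) j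
      have hf1N : ((Aw ⟨1, hi1⟩).filter (fun B => ∃ p ∈ B, p.1 = j)).card * (w * w) ≤
          w * n 2 * (Aw ⟨1, hi1⟩).card := by
        calc _ ≤ (w * (w * w - 1).choose (n 2 - 1)) * (w * w) :=
              Nat.mul_le_mul_right _ hf1
          _ = w * ((w * w) * (w * w - 1).choose (n 2 - 1)) := by ring
          _ = w * (n 2 * (w * w).choose (n 2)) := by
              rw [aux_choose (w * w) (n 2) hN1 hn2]
          _ = w * n 2 * (Aw ⟨1, hi1⟩).card := by rw [ha1]; ring
      have hf2N : ((Aw ⟨2, hi2⟩).filter (fun B => ∃ q ∈ B, q.2 = j)).card * (w * w) ≤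
          w * n 3 * (Aw ⟨2, hi2⟩).card := by
        calc _ ≤ (w * (w * w - 1).choose (n 3 - 1)) * (w * w) :=
              Nat.mul_le_mul_right _ hf2
          _ = w * ((w * w) * (w * w - 1).choose (n 3 - 1)) := by ring
          _ = w * (n 3 * (w * w).choose (n 3)) := by
              rw [aux_choose (w * w) (n 3) hN1 hn3]
          _ = w * n 3 * (Aw ⟨2, hi2⟩).card := by rw [ha2]; ring
      refine Nat.le_of_mul_le_mul_right ?_
        (show 0 < (Aw ⟨1, hi1⟩).card * (Aw ⟨2, hi2⟩).card from
          Nat.mul_pos (hcardA _) (hcardA _))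
      calc ((Fintype.piFinset Aw).filter
          (fun M => (∃ p ∈ M ⟨1, hi1⟩, p.1 = j) ∧ (∃ q ∈ M ⟨2, hi2⟩, q.2 = j))).card *
            (w * w * (w * w)) * ((Aw ⟨1, hi1⟩).card * (Aw ⟨2, hi2⟩).card)
          = ((Fintype.piFinset Aw).filter
          (fun M => (∃ p ∈ M ⟨1, hi1⟩, p.1 = j) ∧ (∃ q ∈ M ⟨2, hi2⟩, q.2 = j))).card *
            ((Aw ⟨1, hi1⟩).card * (Aw ⟨2, hi2⟩).card) * (w * w * (w * w)) := by ring
        _ = (Fintype.piFinset Aw).card *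
            (((Aw ⟨1, hi1⟩).filter (fun B => ∃ p ∈ B, p.1 = j)).card *
              ((Aw ⟨2, hi2⟩).filter (fun B => ∃ q ∈ B, q.2 = j)).card) * (w * w * (w * w)) := by
            rw [heq]
        _ = (Fintype.piFinset Aw).card *
            ((((Aw ⟨1, hi1⟩).filter (fun B => ∃ p ∈ B, p.1 = j)).card * (w * w)) *
              (((Aw ⟨2, hi2⟩).filter (fun B => ∃ q ∈ B, q.2 = j)).card * (w * w))) := by ring
        _ ≤ (Fintype.piFinset Aw).card *
            ((w * n 2 * (Aw ⟨1, hi1⟩).card) * (w * n 3 * (Aw ⟨2, hi2⟩).card)) :=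
            Nat.mul_le_mul_left _ (Nat.mul_le_mul hf1N hf2N)
        _ = (Fintype.piFinset Aw).card * (w * n 2 * (w * n 3)) *
            ((Aw ⟨1, hi1⟩).card * (Aw ⟨2, hi2⟩).card) := by ring
    -- bad set is covered by the union over j
    have hbadsub : (Fintype.piFinset Aw).filter (fun M => ¬ mlpNoPath d C L w M) ⊆
        (Finset.range w).biUnion (fun j => (Fintype.piFinset Aw).filter
          (fun M => (∃ p ∈ M ⟨1, hi1⟩, p.1 = j) ∧ (∃ q ∈ M ⟨2, hi2⟩, q.2 = j))) := by
      intro M hM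
      rw [Finset.mem_filter] at hM
      obtain ⟨hMpi, hMbad⟩ := hM
      rw [mlpNoPath, not_not] at hMbad
      obtain ⟨path, hpath⟩ := hMbad
      have hsucc_eq : (⟨1, hi1⟩ : Fin L).succ = ((⟨2, hi2⟩ : Fin L).castSucc) := by
        ext
        simp [Fin.val_succ]
      have hval : (((⟨1, hi1⟩ : Fin L).succ : Fin (L + 1)) : ℕ) = 2 := by
        simp [Fin.val_succ]
      have hjw : ((path ((⟨1, hi1⟩ : Fin L).succ)) : ℕ) < w := by
        have hlt := (path ((⟨1, hi1⟩ : Fin L).succ)).isLt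
        have heq2 : mlpDim d C L w (((⟨1, hi1⟩ : Fin L).succ : Fin (L + 1)) : ℕ) = w := by
          rw [hval]; exact hdim 2 (by omega) (by omega)
        omega
      refine Finset.mem_biUnion.2 ⟨((path ((⟨1, hi1⟩ : Fin L).succ)) : ℕ),
        Finset.mem_range.2 hjw, Finset.mem_filter.2 ⟨hMpi, ?_, ?_⟩⟩
      · exact ⟨_, hpath ⟨1, hi1⟩, rfl⟩
      · refine ⟨_, hpath ⟨2, hi2⟩, ?_⟩
        show ((path ((⟨2, hi2⟩ : Fin L).castSucc)) : ℕ) = _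
        rw [← hsucc_eq]
    have hbad : ((Fintype.piFinset Aw).filter (fun M => ¬ mlpNoPath d C L w M)).card *
        (w * w * (w * w)) ≤
        (Fintype.piFinset Aw).card * (n 2 * n 3) * (w * w * w) := by
      calc ((Fintype.piFinset Aw).filter (fun M => ¬ mlpNoPath d C L w M)).card *
            (w * w * (w * w))
          ≤ (∑ j ∈ Finset.range w, ((Fintype.piFinset Aw).filter
              (fun M => (∃ p ∈ M ⟨1, hi1⟩, p.1 = j) ∧ (∃ q ∈ M ⟨2, hi2⟩, q.2 = j))).card) *
              (w * w * (w * w)) :=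
            Nat.mul_le_mul_right _
              (le_trans (Finset.card_le_card hbadsub) Finset.card_biUnion_le)
        _ = ∑ j ∈ Finset.range w, ((Fintype.piFinset Aw).filter
              (fun M => (∃ p ∈ M ⟨1, hi1⟩, p.1 = j) ∧ (∃ q ∈ M ⟨2, hi2⟩, q.2 = j))).card *
              (w * w * (w * w)) := Finset.sum_mul _ _ _
        _ ≤ ∑ _j ∈ Finset.range w, (Fintype.piFinset Aw).card * (w * n 2 * (w * n 3)) :=
            Finset.sum_le_sum hstep
        _ = w * ((Fintype.piFinset Aw).card * (w * n 2 * (w * n 3))) := by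
            rw [Finset.sum_const, Finset.card_range, smul_eq_mul]
        _ = (Fintype.piFinset Aw).card * (n 2 * n 3) * (w * w * w) := by ring
    have hbw : ((Fintype.piFinset Aw).filter (fun M => ¬ mlpNoPath d C L w M)).card * w ≤
        (Fintype.piFinset Aw).card * (n 2 * n 3) := by
      refine Nat.le_of_mul_le_mul_right ?_ (show 0 < w * w * w by positivity)
      calc ((Fintype.piFinset Aw).filter (fun M => ¬ mlpNoPath d C L w M)).card * w *
            (w * w * w)
          = ((Fintype.piFinset Aw).filter (fun M => ¬ mlpNoPath d C L w M)).card *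
            (w * w * (w * w)) := by ring
        _ ≤ (Fintype.piFinset Aw).card * (n 2 * n 3) * (w * w * w) := hbad
    have hgb : ((Fintype.piFinset Aw).filter (mlpNoPath d C L w)).card +
        ((Fintype.piFinset Aw).filter (fun M => ¬ mlpNoPath d C L w M)).card =
        (Fintype.piFinset Aw).card :=
      Finset.card_filter_add_card_filter_not _
    have hT' : (0 : ℝ) < ((Fintype.piFinset Aw).card : ℝ) := by exact_mod_cast hT
    have hw' : (0 : ℝ) < (w : ℝ) := by exact_mod_cast hw1
    constructor
    · have hgood : (((Fintype.piFinset Aw).filter (mlpNoPath d C L w)).card : ℝ) =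
          ((Fintype.piFinset Aw).card : ℝ) -
          (((Fintype.piFinset Aw).filter (fun M => ¬ mlpNoPath d C L w M)).card : ℝ) := by
        have := hgb
        push_cast [← this]
        ring
      rw [hgood, sub_div, div_self hT'.ne']
      have hfrac : (((Fintype.piFinset Aw).filter
            (fun M => ¬ mlpNoPath d C L w M)).card : ℝ) / ((Fintype.piFinset Aw).card : ℝ) ≤
          (n 2 * n 3 : ℝ) / w := by
        rw [div_le_div_iff₀ hT' hw']
        calc (((Fintype.piFinset Aw).filter (fun M => ¬ mlpNoPath d C L w M)).card : ℝ) * w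
            ≤ ((Fintype.piFinset Aw).card : ℝ) * (n 2 * n 3) := by exact_mod_cast hbw
          _ = (n 2 * n 3 : ℝ) * ((Fintype.piFinset Aw).card : ℝ) := by ring
      linarith
    · rw [div_le_one hT']
      exact_mod_cast Finset.card_filter_le _ _
  have h0 : Tendsto (fun w : ℕ => 1 - (n 2 * n 3 : ℝ) / w) atTop (nhds 1) := by
    have h := tendsto_const_div_atTop_nhds_zero_nat ((n 2 : ℝ) * n 3)
    have := (tendsto_const_nhds (x := (1 : ℝ)) (f := atTop)).sub h
    simpa using this
  exact tendsto_of_tendsto_of_tendsto_of_le_of_le' h0 tendsto_const_nhds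
    (key.mono fun w h => h.1) (key.mono fun w h => h.2)
end

section
/- Let M¹, M² be independent uniformly random w × w binary matrices with n₁ and n₂ ones respectively, and define the 'no connected path' probability P(w) as the probability that no nonzero row of M¹ aligns with a nonzero column of M². Then P(w) = ∑_{k=1}^{n₁} [C(w,k)·|A¹_k| / C(w², n₁)] · [C(w(w−k), n₂) / C(w², n₂)], where A¹_k is the set of w × w binary matrices with n₁ ones whose nonzero rows are exactly {1,…,k}. -/
open Finset

lemma myCardFilterLt (w k : ℕ) (hk : k ≤ w) :
    (Finset.univ.filter (fun i : Fin w => (i : ℕ) < k)).card = k := by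
  have : Finset.univ.filter (fun i : Fin w => (i : ℕ) < k)
      = Finset.map (Fin.castLEEmb hk) Finset.univ := by
    ext i
    simp only [Finset.mem_filter, Finset.mem_univ, true_and, Finset.mem_map,
      Fin.castLEEmb, Function.Embedding.coeFn_mk]
    constructor
    · intro h
      exact ⟨⟨(i : ℕ), h⟩, rfl⟩
    · rintro ⟨j, -, rfl⟩
      exact j.isLt
  rw [this, Finset.card_map, Finset.card_univ, Fintype.card_fin]

lemma myExistsPerm {w : ℕ} (K R : Finset (Fin w)) (h : K.card = R.card) :
    ∃ σ : Equiv.Perm (Fin w), ∀ x, x ∈ K ↔ σ x ∈ R := by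
  classical
  have e : {x // x ∈ K} ≃ {x // x ∈ R} :=
    Fintype.equivOfCardEq (by simpa [Fintype.card_coe] using h)
  refine ⟨e.extendSubtype, fun x => ⟨fun hx => e.extendSubtype_mem x hx, fun hx => ?_⟩⟩
  by_contra hxK
  exact e.extendSubtype_not_mem x hxK hx

lemma myFiberCard {w : ℕ} (n : ℕ) (R R' : Finset (Fin w)) (h : R.card = R'.card) :
    (((Finset.univ : Finset (Fin w × Fin w)).powersetCard n).filter
      (fun S => S.image Prod.fst = R)).card =
    (((Finset.univ : Finset (Fin w × Fin w)).powersetCard n).filter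
      (fun S => S.image Prod.fst = R')).card := by
  classical
  obtain ⟨σ, hσ⟩ := myExistsPerm R R' h
  have himg : R.image σ = R' := by
    ext y
    simp only [mem_image]
    constructor
    · rintro ⟨x, hx, rfl⟩; exact (hσ x).1 hx
    · intro hy
      exact ⟨σ.symm y, (hσ _).2 (by simpa using hy), by simp⟩
  have hinj : Function.Injective (Prod.map σ (id : Fin w → Fin w)) :=
    Function.Injective.prodMap σ.injective Function.injective_id
  have hinj' : Function.Injective (Prod.map σ.symm (id : Fin w → Fin w)) :=
    Function.Injective.prodMap σ.symm.injective Function.injective_id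
  refine Finset.card_bij' (fun S _ => S.image (Prod.map σ id))
    (fun S _ => S.image (Prod.map σ.symm id)) ?_ ?_ ?_ ?_
  · intro S hS
    simp only [mem_filter, mem_powersetCard_univ] at hS ⊢
    constructor
    · rw [Finset.card_image_of_injective _ hinj]; exact hS.1
    · rw [Finset.image_image]
      have : Prod.fst ∘ Prod.map σ (id : Fin w → Fin w) = σ ∘ Prod.fst := rfl
      rw [this, ← Finset.image_image, hS.2, himg]
  · intro S hS
    simp only [mem_filter, mem_powersetCard_univ] at hS ⊢
    constructor
    · rw [Finset.card_image_of_injective _ hinj']; exact hS.1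
    · rw [Finset.image_image]
      have : Prod.fst ∘ Prod.map σ.symm (id : Fin w → Fin w) = σ.symm ∘ Prod.fst := rfl
      rw [this, ← Finset.image_image, hS.2, ← himg, Finset.image_image]
      simp
  · intro S _
    rw [Finset.image_image]
    have : Prod.map σ.symm (id : Fin w → Fin w) ∘ Prod.map σ id = id := by
      funext x; obtain ⟨a, b⟩ := x; simp
    rw [this, Finset.image_id]
  · intro S _
    rw [Finset.image_image]
    have : Prod.map σ (id : Fin w → Fin w) ∘ Prod.map σ.symm id = id := by
      funext x; obtain ⟨a, b⟩ := x; simp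
    rw [this, Finset.image_id]

lemma myMainCount (w n₁ n₂ : ℕ) (h₁ : 0 < n₁) (hw : n₁ ≤ w) (A : ℕ → ℕ)
    (hA : ∀ k, A k =
      (((Finset.univ : Finset (Fin w × Fin w)).powersetCard n₁).filter
        (fun S : Finset (Fin w × Fin w) =>
          S.image Prod.fst = Finset.univ.filter (fun i : Fin w => (i : ℕ) < k))).card) :
    (((Finset.univ : Finset (Fin w × Fin w)).powersetCard n₁ ×ˢ
        (Finset.univ : Finset (Fin w × Fin w)).powersetCard n₂).filter
        (fun p : Finset (Fin w × Fin w) × Finset (Fin w × Fin w) =>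
          ∀ i j m : Fin w, (i, j) ∈ p.1 → (m, i) ∉ p.2)).card =
    ∑ k ∈ Finset.Icc 1 n₁,
      Nat.choose w k * A k * Nat.choose (w * (w - k)) n₂ := by
  classical
  rw [Finset.card_filter, Finset.sum_product]
  -- inner sum over S₂ equals choose (w*(w - card image)) n₂
  have hinner : ∀ S₁ ∈ (Finset.univ : Finset (Fin w × Fin w)).powersetCard n₁,
      (∑ S₂ ∈ (Finset.univ : Finset (Fin w × Fin w)).powersetCard n₂,
        if (∀ i j m : Fin w, (i, j) ∈ S₁ → (m, i) ∉ S₂) then 1 else 0) =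
      Nat.choose (w * (w - (S₁.image Prod.fst).card)) n₂ := by
    intro S₁ _
    rw [← Finset.card_filter]
    have hset : ((Finset.univ : Finset (Fin w × Fin w)).powersetCard n₂).filter
        (fun S₂ => ∀ i j m : Fin w, (i, j) ∈ S₁ → (m, i) ∉ S₂)
        = Finset.powersetCard n₂
          ((Finset.univ : Finset (Fin w)) ×ˢ ((Finset.univ : Finset (Fin w)) \ S₁.image Prod.fst)) := by
      ext S₂
      simp only [mem_filter, Finset.mem_powersetCard, Finset.subset_univ, true_and]
      constructor
      · rintro ⟨hcard, hcond⟩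
        refine ⟨?_, hcard⟩
        intro x hx
        obtain ⟨m, i⟩ := x
        simp only [Finset.mem_product, Finset.mem_univ, true_and, Finset.mem_sdiff,
          Finset.mem_image]
        rintro ⟨⟨i', j⟩, hij, rfl⟩
        exact hcond i' j m hij hx
      · rintro ⟨hsub, hcard⟩
        refine ⟨hcard, fun i j m hij hmi => ?_⟩
        have := hsub hmi
        simp only [Finset.mem_product, Finset.mem_sdiff, Finset.mem_image] at this
        exact this.2.2 ⟨(i, j), hij, rfl⟩
    rw [hset, Finset.card_powersetCard, Finset.card_product, Finset.card_univ,
      Fintype.card_fin, Finset.card_sdiff_of_subset (Finset.subset_univ _), Finset.card_univ,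
      Fintype.card_fin]
  rw [Finset.sum_congr rfl hinner]
  -- fiber over k = card image
  have hmaps : ∀ S₁ ∈ (Finset.univ : Finset (Fin w × Fin w)).powersetCard n₁,
      (S₁.image Prod.fst).card ∈ Finset.Icc 1 n₁ := by
    intro S₁ hS₁
    rw [mem_powersetCard_univ] at hS₁
    rw [Finset.mem_Icc]
    constructor
    · rw [Nat.one_le_iff_ne_zero, Ne, Finset.card_eq_zero, Finset.image_eq_empty,
        ← Finset.card_eq_zero, hS₁]
      omega
    · calc (S₁.image Prod.fst).card ≤ S₁.card := Finset.card_image_le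
        _ = n₁ := hS₁
  rw [← Finset.sum_fiberwise_of_maps_to hmaps]
  refine Finset.sum_congr rfl ?_
  intro k hk
  rw [Finset.mem_Icc] at hk
  have hkw : k ≤ w := le_trans hk.2 hw
  -- each term in the inner sum is constant
  have hconst : ∀ S₁ ∈ ((Finset.univ : Finset (Fin w × Fin w)).powersetCard n₁).filter
      (fun S₁ => (S₁.image Prod.fst).card = k),
      Nat.choose (w * (w - (S₁.image Prod.fst).card)) n₂
        = Nat.choose (w * (w - k)) n₂ := by
    intro S₁ hS₁
    rw [(Finset.mem_filter.1 hS₁).2]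
  rw [Finset.sum_congr rfl hconst, Finset.sum_const, smul_eq_mul]
  congr 1
  -- card of {S₁ : card image = k} = choose w k * A k
  have hmaps2 : ∀ S₁ ∈ ((Finset.univ : Finset (Fin w × Fin w)).powersetCard n₁).filter
      (fun S₁ => (S₁.image Prod.fst).card = k),
      S₁.image Prod.fst ∈ (Finset.univ : Finset (Fin w)).powersetCard k := by
    intro S₁ hS₁
    rw [mem_powersetCard_univ]
    exact (Finset.mem_filter.1 hS₁).2
  rw [Finset.card_eq_sum_ones, ← Finset.sum_fiberwise_of_maps_to hmaps2]
  have hterm : ∀ R ∈ (Finset.univ : Finset (Fin w)).powersetCard k,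
      (∑ S₁ ∈ (((Finset.univ : Finset (Fin w × Fin w)).powersetCard n₁).filter
        (fun S₁ => (S₁.image Prod.fst).card = k)).filter
        (fun S₁ => S₁.image Prod.fst = R), 1) = A k := by
    intro R hR
    rw [mem_powersetCard_univ] at hR
    rw [Finset.filter_filter, ← Finset.card_eq_sum_ones]
    have : (((Finset.univ : Finset (Fin w × Fin w)).powersetCard n₁).filter
        (fun S₁ => (S₁.image Prod.fst).card = k ∧ S₁.image Prod.fst = R))
        = (((Finset.univ : Finset (Fin w × Fin w)).powersetCard n₁).filter
        (fun S₁ => S₁.image Prod.fst = R)) := by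
      apply Finset.filter_congr
      intro S₁ _
      simp only [and_iff_right_iff_imp]
      intro h; rw [h, hR]
    rw [this, hA k]
    exact myFiberCard n₁ R _ (by rw [hR, myCardFilterLt w k hkw])
  rw [Finset.sum_congr rfl hterm, Finset.sum_const, smul_eq_mul,
    Finset.card_powersetCard, Finset.card_univ, Fintype.card_fin]


/-- for independent uniformly random `w × w` 0/1 masks `M¹, M²` with `n₁`
and `n₂` ones, the probability `P(w)` that no nonzero row of `M¹` aligns with a nonzero
column of `M²` satisfies
`P(w) = ∑_{k=1}^{n₁} [C(w,k)·A_k / C(w², n₁)] · [C(w(w−k), n₂) / C(w², n₂)]`,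
where `A_k` counts the masks with `n₁` ones whose nonzero rows are exactly the first
`k` rows. -/
theorem stmt16 (w n₁ n₂ : ℕ) (h₁ : 0 < n₁) (h₂ : 0 < n₂) (hw : n₁ ≤ w)
    (A : ℕ → ℕ)
    (hA : ∀ k, A k =
      (((Finset.univ : Finset (Fin w × Fin w)).powersetCard n₁).filter
        (fun S : Finset (Fin w × Fin w) =>
          S.image Prod.fst = Finset.univ.filter (fun i : Fin w => (i : ℕ) < k))).card) :
    ((((Finset.univ : Finset (Fin w × Fin w)).powersetCard n₁ ×ˢ
        (Finset.univ : Finset (Fin w × Fin w)).powersetCard n₂).filter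
        (fun p : Finset (Fin w × Fin w) × Finset (Fin w × Fin w) =>
          ∀ i j m : Fin w, (i, j) ∈ p.1 → (m, i) ∉ p.2)).card : ℝ) /
      ((Nat.choose (w ^ 2) n₁ : ℝ) * (Nat.choose (w ^ 2) n₂ : ℝ)) =
    ∑ k ∈ Finset.Icc 1 n₁,
      (((Nat.choose w k : ℝ) * (A k : ℝ)) / (Nat.choose (w ^ 2) n₁ : ℝ)) *
        ((Nat.choose (w * (w - k)) n₂ : ℝ) / (Nat.choose (w ^ 2) n₂ : ℝ)) := by
  rw [myMainCount w n₁ n₂ h₁ hw A hA]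
  simp only [div_mul_div_comm]
  rw [← Finset.sum_div]
  congr 1
  push_cast
  exact Finset.sum_congr rfl (fun k _ => by ring)
end
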